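/- If S ⊆ ℤ^n is semilinear, then its Kleene star in the Minkowski-sum monoid on Set(ℤ^n) — namely the set of all finite sums x_1 + ⋯ + x_k with k ≥ 0 and x_1, …, x_k ∈ S (equivalently, the underlying set of the additive submonoid of ℤ^n generated by S) — is semilinear. -/

import Mathlib

open scoped Pointwise

/-- A set `S ⊆ ℤ^n` is linear if it is the translate by some `b` of the
additive submonoid generated by a finite set `P`. -/
def IsLinearSetInt {n : ℕ} (S : Set (Fin n → ℤ)) : Prop :=
  ∃ (b : Fin n → ℤ) (P : Finset (Fin n → ℤ)),
    S = {x | ∃ p ∈ AddSubmonoid.closure (P : Set (Fin n → ℤ)), x = b + p}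

/-- A set is semilinear if it is a finite union of linear sets. -/
def IsSemilinearSetInt {n : ℕ} (S : Set (Fin n → ℤ)) : Prop :=
  ∃ (k : ℕ) (T : Fin k → Set (Fin n → ℤ)),
    (∀ i, IsLinearSetInt (T i)) ∧ S = ⋃ i, T i

section Aux

variable {n : ℕ}

lemma linear_eq_singleton_add (b : Fin n → ℤ) (P : Finset (Fin n → ℤ)) :
    {x | ∃ p ∈ AddSubmonoid.closure (P : Set (Fin n → ℤ)), x = b + p}
      = {b} + ((AddSubmonoid.closure (P : Set (Fin n → ℤ))) : Set (Fin n → ℤ)) := by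
  ext x
  simp only [Set.mem_add, Set.mem_singleton_iff, Set.mem_setOf_eq, SetLike.mem_coe]
  constructor
  · rintro ⟨p, hp, rfl⟩; exact ⟨b, rfl, p, hp, rfl⟩
  · rintro ⟨a, rfl, p, hp, rfl⟩; exact ⟨p, hp, rfl⟩

lemma coe_sup_eq_add (A B : AddSubmonoid (Fin n → ℤ)) :
    ((A ⊔ B : AddSubmonoid (Fin n → ℤ)) : Set (Fin n → ℤ)) = (A : Set _) + (B : Set _) := by
  ext x
  simp [AddSubmonoid.mem_sup, Set.mem_add]

lemma IsLinearSetInt.add {A B : Set (Fin n → ℤ)} (hA : IsLinearSetInt A) (hB : IsLinearSetInt B) :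
    IsLinearSetInt (A + B) := by
  obtain ⟨b₁, P₁, rfl⟩ := hA
  obtain ⟨b₂, P₂, rfl⟩ := hB
  refine ⟨b₁ + b₂, P₁ ∪ P₂, ?_⟩
  rw [linear_eq_singleton_add, linear_eq_singleton_add, linear_eq_singleton_add,
    add_add_add_comm, Set.singleton_add_singleton]
  congr 1
  rw [← coe_sup_eq_add, Finset.coe_union, AddSubmonoid.closure_union]

lemma isSemilinearSet_of_fintype {ι : Type} [Fintype ι] (T : ι → Set (Fin n → ℤ))
    (h : ∀ i, IsLinearSetInt (T i)) : IsSemilinearSetInt (⋃ i, T i) := by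
  refine ⟨Fintype.card ι, fun j => T ((Fintype.equivFin ι).symm j), fun j => h _, ?_⟩
  exact ((Fintype.equivFin ι).symm.iSup_comp (g := T)).symm

lemma IsSemilinearSetInt.add {A B : Set (Fin n → ℤ)} (hA : IsSemilinearSetInt A)
    (hB : IsSemilinearSetInt B) : IsSemilinearSetInt (A + B) := by
  obtain ⟨k, T, hT, rfl⟩ := hA
  obtain ⟨m, U, hU, rfl⟩ := hB
  have : (⋃ i, T i) + (⋃ j, U j) = ⋃ p : Fin k × Fin m, (T p.1 + U p.2) := by
    rw [Set.iUnion_add]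
    ext x
    simp only [Set.mem_iUnion, Set.add_iUnion]
    exact ⟨fun ⟨i, j, h⟩ => ⟨(i, j), h⟩, fun ⟨⟨i, j⟩, h⟩ => ⟨i, j, h⟩⟩
  rw [this]
  exact isSemilinearSet_of_fintype _ fun p => (hT p.1).add (hU p.2)

lemma IsLinearSetInt.union {A B : Set (Fin n → ℤ)} (hA : IsSemilinearSetInt A)
    (hB : IsSemilinearSetInt B) : IsSemilinearSetInt (A ∪ B) := by
  obtain ⟨k, T, hT, rfl⟩ := hA
  obtain ⟨m, U, hU, rfl⟩ := hB
  have : (⋃ i, T i) ∪ (⋃ j, U j) = ⋃ s : Fin k ⊕ Fin m, Sum.elim T U s := by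
    simp [Set.iUnion_sum]
  rw [this]
  exact isSemilinearSet_of_fintype _ (by rintro (i | j) <;> simp [hT, hU])

lemma decomp (b : Fin n → ℤ) (P : Finset (Fin n → ℤ)) (p : Fin n → ℤ)
    (hp : p ∈ AddSubmonoid.closure ((insert b P : Finset _) : Set (Fin n → ℤ))) :
    ∃ m : ℕ, ∃ q ∈ AddSubmonoid.closure (P : Set (Fin n → ℤ)), p = m • b + q := by
  induction hp using AddSubmonoid.closure_induction with
  | mem x hx =>
    rw [Finset.coe_insert, Set.mem_insert_iff] at hx
    rcases hx with rfl | hx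
    · exact ⟨1, 0, zero_mem _, by simp⟩
    · exact ⟨0, x, AddSubmonoid.subset_closure hx, by simp⟩
  | zero => exact ⟨0, 0, zero_mem _, by simp⟩
  | add x y _ _ ihx ihy =>
    obtain ⟨m₁, q₁, hq₁, rfl⟩ := ihx
    obtain ⟨m₂, q₂, hq₂, rfl⟩ := ihy
    exact ⟨m₁ + m₂, q₁ + q₂, add_mem hq₁ hq₂, by rw [add_nsmul]; abel⟩

lemma star_linear (b : Fin n → ℤ) (P : Finset (Fin n → ℤ)) :
    ((AddSubmonoid.closure {x | ∃ p ∈ AddSubmonoid.closure (P : Set (Fin n → ℤ)), x = b + p} :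
        AddSubmonoid (Fin n → ℤ)) : Set (Fin n → ℤ))
      = {(0 : Fin n → ℤ)} ∪
        {x | ∃ p ∈ AddSubmonoid.closure ((insert b P : Finset _) : Set (Fin n → ℤ)), x = b + p} := by
  ext x
  constructor
  · intro hx
    induction hx using AddSubmonoid.closure_induction with
    | mem y hy =>
      obtain ⟨p, hp, rfl⟩ := hy
      exact Or.inr ⟨p, AddSubmonoid.closure_mono (by simp) hp, rfl⟩
    | zero => exact Or.inl rfl
    | add y z _ _ ihy ihz =>
      rcases ihy with rfl | ⟨p, hp, rfl⟩
      · simpa using ihz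
      rcases ihz with rfl | ⟨q, hq, rfl⟩
      · exact Or.inr ⟨p, hp, by simp⟩
      · refine Or.inr ⟨b + p + q, ?_, by abel⟩
        exact add_mem (add_mem (AddSubmonoid.subset_closure (by simp)) hp) hq
  · rintro (rfl | ⟨p, hp, rfl⟩)
    · exact zero_mem _
    obtain ⟨m, q, hq, rfl⟩ := decomp b P p hp
    have hb : ∀ r ∈ AddSubmonoid.closure (P : Set (Fin n → ℤ)),
        b + r ∈ AddSubmonoid.closure
          {x | ∃ p ∈ AddSubmonoid.closure (P : Set (Fin n → ℤ)), x = b + p} :=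
      fun r hr => AddSubmonoid.subset_closure ⟨r, hr, rfl⟩
    have : b + (m • b + q) = m • (b + 0) + (b + q) := by simp [smul_add]; abel
    rw [this]
    exact add_mem (nsmul_mem (hb 0 (zero_mem _)) m) (hb q hq)

end Aux

/-- Semilinear sets are closed under Kleene star in the Minkowski-sum monoid:
the set of all finite sums of elements of `S`, i.e. the underlying set of the
additive submonoid generated by `S`, is semilinear. -/
theorem isSemilinearSet_closure {n : ℕ} (S : Set (Fin n → ℤ))
    (hS : IsSemilinearSetInt S) :
    IsSemilinearSetInt ((AddSubmonoid.closure S : AddSubmonoid (Fin n → ℤ)) :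
      Set (Fin n → ℤ)) := by
  obtain ⟨k, T, hT, rfl⟩ := hS
  induction k with
  | zero =>
    have : (⋃ i : Fin 0, T i) = (∅ : Set (Fin n → ℤ)) := by simp
    rw [this, AddSubmonoid.closure_empty]
    refine ⟨1, fun _ => {0}, fun _ => ⟨0, ∅, ?_⟩, by simp [AddSubmonoid.coe_bot]⟩
    simp [AddSubmonoid.closure_empty]
  | succ k ih =>
    have hU : (⋃ i : Fin (k + 1), T i) = T 0 ∪ ⋃ i : Fin k, T i.succ := by
      ext x
      simp only [Set.mem_iUnion, Set.mem_union]
      constructor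
      · rintro ⟨i, hi⟩
        rcases Fin.eq_zero_or_eq_succ i with rfl | ⟨j, rfl⟩
        · exact Or.inl hi
        · exact Or.inr ⟨j, hi⟩
      · rintro (h | ⟨j, h⟩)
        · exact ⟨0, h⟩
        · exact ⟨j.succ, h⟩
    rw [hU, AddSubmonoid.closure_union, coe_sup_eq_add]
    have h0 : IsSemilinearSetInt ((AddSubmonoid.closure (T 0) : AddSubmonoid (Fin n → ℤ)) :
        Set (Fin n → ℤ)) := by
      obtain ⟨b, P, hP⟩ := hT 0
      rw [hP, star_linear]
      have e : ({(0 : Fin n → ℤ)} ∪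
          {x | ∃ p ∈ AddSubmonoid.closure ((insert b P : Finset _) : Set (Fin n → ℤ)),
            x = b + p}) = ⋃ j : Fin 2, if j = 0 then {(0 : Fin n → ℤ)} else
          {x | ∃ p ∈ AddSubmonoid.closure ((insert b P : Finset _) : Set (Fin n → ℤ)),
            x = b + p} := by
        ext x
        simp only [Set.mem_iUnion, Set.mem_union]
        constructor
        · rintro (h | h)
          · exact ⟨0, by simpa using h⟩
          · exact ⟨1, by simpa using h⟩
        · rintro ⟨j, hj⟩
          split at hj
          · exact Or.inl hj
          · exact Or.inr hj
      rw [e]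
      refine ⟨2, _, fun j => ?_, rfl⟩
      split
      · exact ⟨0, ∅, by simp [AddSubmonoid.closure_empty]⟩
      · exact ⟨b, insert b P, rfl⟩
    exact h0.add (ih (fun i => T i.succ) (fun i => hT i.succ))
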